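/- If G is a (not necessarily connected) twin-free graph on n vertices with imax(G) = k where k ≥ 2, then n ≤ 2^{k-1} + k - 1. -/

import Mathlib

open SimpleGraph

/-- `s` is an independent set in `G`. -/
def IsIndep {V : Type*} (G : SimpleGraph V) (s : Set V) : Prop :=
  ∀ ⦃u⦄, u ∈ s → ∀ ⦃v⦄, v ∈ s → ¬ G.Adj u v

/-- `s` is a maximal independent set in `G`. -/
def IsMaxIndep {V : Type*} (G : SimpleGraph V) (s : Set V) : Prop :=
  IsIndep G s ∧ ∀ t : Set V, IsIndep G t → s ⊆ t → s = t

/-- The number of maximal independent sets of `G`. -/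
noncomputable def imax {V : Type*} (G : SimpleGraph V) : ℕ :=
  Set.ncard {s : Set V | IsMaxIndep G s}

/-- `G` is twin-free: no two distinct vertices have the same open neighbourhood. -/
def TwinFree {V : Type*} (G : SimpleGraph V) : Prop :=
  ∀ u v : V, G.neighborSet u = G.neighborSet v → u = v

section Basic
variable {V : Type*} [Fintype V] (G : SimpleGraph V)

/-- Every independent set extends to a maximal one. -/
lemma exists_maxIndep_superset (s : Set V) (hs : IsIndep G s) :
    ∃ t, IsMaxIndep G t ∧ s ⊆ t := by
  have hfin : {t : Set V | IsIndep G t ∧ s ⊆ t}.Finite := Set.toFinite _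
  obtain ⟨t, ⟨ht, hst⟩, hmax⟩ := Set.Finite.exists_maximalFor id _ hfin ⟨s, hs, subset_rfl⟩
  exact ⟨t, ⟨ht, fun t' ht' htt' => subset_antisymm htt' (hmax (j := t') ⟨ht', hst.trans htt'⟩ htt')⟩, hst⟩

lemma exists_maxIndep_mem (v : V) : ∃ t, IsMaxIndep G t ∧ v ∈ t := by
  obtain ⟨t, ht, hsub⟩ := exists_maxIndep_superset G {v}
    (by intro a ha b hb; simp at ha hb; subst ha hb; simp)
  exact ⟨t, ht, hsub rfl⟩

lemma exists_maxIndep_mem_pair {u v : V} (h : ¬ G.Adj u v) :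
    ∃ t, IsMaxIndep G t ∧ u ∈ t ∧ v ∈ t := by
  have hind : IsIndep G {u, v} := by
    intro a ha b hb hadj
    simp only [Set.mem_insert_iff, Set.mem_singleton_iff] at ha hb
    rcases ha with rfl | rfl <;> rcases hb with rfl | rfl
    · exact G.loopless.irrefl _ hadj
    · exact h hadj
    · exact h hadj.symm
    · exact G.loopless.irrefl _ hadj
  obtain ⟨t, ht, hsub⟩ := exists_maxIndep_superset G {u, v} hind
  exact ⟨t, ht, hsub (by simp), hsub (by simp)⟩

lemma eq_of_maxIndep_iff (htf : TwinFree G) {u v : V}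
    (h : ∀ S, IsMaxIndep G S → (u ∈ S ↔ v ∈ S)) : u = v := by
  have hsymm : ∀ a b : V, (∀ S, IsMaxIndep G S → (a ∈ S ↔ b ∈ S)) → ¬ G.Adj a b →
      G.neighborSet a ⊆ G.neighborSet b := by
    intro a b hab hnadj w hw
    by_contra hwb
    have hwa : G.Adj a w := hw
    have hwv : ¬ G.Adj b w := hwb
    obtain ⟨S, hS, hbS, hwS⟩ := exists_maxIndep_mem_pair G hwv
    have haS : a ∈ S := (hab S hS).2 hbS
    exact hS.1 haS hwS hwa
  have hnadj : ¬ G.Adj u v := by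
    intro hadj
    obtain ⟨S, hS, huS⟩ := exists_maxIndep_mem G u
    exact hS.1 huS ((h S hS).1 huS) hadj
  have hnadj' : ¬ G.Adj v u := fun hadj => hnadj hadj.symm
  exact htf u v (le_antisymm (hsymm u v h hnadj)
    (hsymm v u (fun S hS => (h S hS).symm) hnadj'))

end Basic

open scoped Classical

section Core
variable {V : Type*} [Fintype V]

/-- The set of elements of `T` on which `S` and `S'` disagree. -/
noncomputable def Dset (T : Finset V) (S S' : Set V) : Finset V :=
  T.filter (fun u => ¬(u ∈ S ↔ u ∈ S'))

lemma mem_Dset {T : Finset V} {S S' : Set V} {u : V} :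
    u ∈ Dset T S S' ↔ u ∈ T ∧ ¬(u ∈ S ↔ u ∈ S') := Finset.mem_filter

lemma card_filter_cast (T : Finset V) (p : V → Prop) [DecidablePred p] :
    (((T.filter p).card : ZMod 2)) = ∑ u ∈ T, if p u then (1 : ZMod 2) else 0 := by
  rw [Finset.card_filter]
  push_cast
  exact Finset.sum_congr rfl (fun u _ => by split <;> simp)

lemma Dset_card_cast (T : Finset V) (S S' : Set V) :
    ((Dset T S S').card : ZMod 2)
      = ((T.filter (· ∈ S)).card : ZMod 2) + ((T.filter (· ∈ S')).card : ZMod 2) := by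
  rw [Dset, card_filter_cast, card_filter_cast, card_filter_cast, ← Finset.sum_add_distrib]
  refine Finset.sum_congr rfl (fun u _ => ?_)
  by_cases h1 : u ∈ S <;> by_cases h2 : u ∈ S' <;> simp [h1, h2] <;> decide

set_option maxHeartbeats 2000000 in
lemma core_parity (MF : Finset (Set V)) (T : Finset V) (g : V → V)
    (hflip : ∀ u ∈ T, ∀ S ∈ MF, (u ∈ S ↔ g u ∉ S))
    (hu : ∀ u ∈ T, ∃ S ∈ MF, u ∈ S)
    (hv : ∀ u ∈ T, ∃ S ∈ MF, g u ∈ S)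
    (H1 : ∀ u ∈ T, ∀ u' ∈ T, u ≠ u' → ∃ S ∈ MF, ¬(u ∈ S ↔ u' ∈ S))
    (H2 : ∀ u ∈ T, ∀ u' ∈ T, u ≠ u' → ∃ S ∈ MF, ¬(u ∈ S ↔ g u' ∈ S))
    (hmed : ∀ S₁ ∈ MF, ∀ S₂ ∈ MF, ∀ S₃ ∈ MF, ∃ Sm ∈ MF, ∀ u ∈ T,
      (u ∈ Sm ↔ ((u ∈ S₁ ∧ u ∈ S₂) ∨ (u ∈ S₁ ∧ u ∈ S₃) ∨ (u ∈ S₂ ∧ u ∈ S₃))))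
    (hT : T.Nonempty) :
    ∃ S ∈ MF, ∃ S' ∈ MF,
      ((T.filter (· ∈ S)).card : ZMod 2) ≠ ((T.filter (· ∈ S')).card : ZMod 2) := by
  by_contra hcon
  push_neg at hcon
  -- every Dset has even cardinality
  have hpar : ∀ S ∈ MF, ∀ S' ∈ MF, ((Dset T S S').card : ZMod 2) = 0 := by
    intro S hS S' hS'
    rw [Dset_card_cast, hcon S hS S' hS']
    exact CharTwo.add_self_eq_zero _
  -- a pair with nonempty Dset exists
  obtain ⟨u₀, hu₀⟩ := hT
  obtain ⟨S₁, hS₁, hu₀S₁⟩ := hu u₀ hu₀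
  obtain ⟨S₂, hS₂, hgu₀S₂⟩ := hv u₀ hu₀
  have hu₀S₂ : u₀ ∉ S₂ := fun h => ((hflip u₀ hu₀ S₂ hS₂).1 h) hgu₀S₂
  set P : Finset (Set V × Set V) :=
    (MF ×ˢ MF).filter (fun p => (Dset T p.1 p.2).Nonempty) with hPdef
  have hPne : P.Nonempty := by
    refine ⟨(S₁, S₂), Finset.mem_filter.2 ⟨Finset.mem_product.2 ⟨hS₁, hS₂⟩, ⟨u₀, ?_⟩⟩⟩
    exact mem_Dset.2 ⟨hu₀, fun h => hu₀S₂ (h.1 hu₀S₁)⟩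
  obtain ⟨⟨S, S'⟩, hPmem, hmin⟩ := Finset.exists_min_image P (fun p => (Dset T p.1 p.2).card) hPne
  rw [Finset.mem_filter, Finset.mem_product] at hPmem
  obtain ⟨⟨hS, hS'⟩, hDne⟩ := hPmem
  -- Dset S S' has at least two elements
  have h2dvd : 2 ∣ (Dset T S S').card := by
    have := hpar S hS S' hS'
    exact (ZMod.natCast_eq_zero_iff _ 2).1 this
  have hcpos : 0 < (Dset T S S').card := Finset.card_pos.2 hDne
  have h1lt : 1 < (Dset T S S').card := by omega
  obtain ⟨i₀, hi₀, j₀, hj₀, hij⟩ := Finset.one_lt_card.1 h1lt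
  have hi₀T := (mem_Dset.1 hi₀).1
  have hi₀D := (mem_Dset.1 hi₀).2
  have hj₀T := (mem_Dset.1 hj₀).1
  have hj₀D := (mem_Dset.1 hj₀).2
  by_cases hA : ∃ S'' ∈ MF, (∃ a ∈ Dset T S S', ¬(a ∈ S'' ↔ a ∈ S)) ∧
      (∃ b ∈ Dset T S S', ¬(b ∈ S'' ↔ b ∈ S'))
  · obtain ⟨S'', hS'', ⟨a, ha, haS⟩, ⟨b, hb, hbS⟩⟩ := hA
    obtain ⟨Sm, hSm, hmaj⟩ := hmed S hS S' hS' S'' hS''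
    have hsub : Dset T Sm S ⊆ Dset T S S' := by
      intro u hu'
      obtain ⟨huT, huD⟩ := mem_Dset.1 hu'
      refine mem_Dset.2 ⟨huT, fun hiff => huD ?_⟩
      have := hmaj u huT
      tauto
    have hamem : a ∈ Dset T Sm S := by
      obtain ⟨haT, haD⟩ := mem_Dset.1 ha
      refine mem_Dset.2 ⟨haT, ?_⟩
      have := hmaj a haT
      tauto
    have hbnot : b ∉ Dset T Sm S := by
      obtain ⟨hbT, hbD⟩ := mem_Dset.1 hb
      intro hmem
      obtain ⟨_, hbD'⟩ := mem_Dset.1 hmem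
      have := hmaj b hbT
      tauto
    have hss : Dset T Sm S ⊂ Dset T S S' := ⟨hsub, fun hsup => hbnot (hsup hb)⟩
    have hlt := Finset.card_lt_card hss
    have hmem' : (Sm, S) ∈ P := Finset.mem_filter.2
      ⟨Finset.mem_product.2 ⟨hSm, hS⟩, ⟨a, hamem⟩⟩
    have := hmin (Sm, S) hmem'
    simp only at this
    omega
  · push_neg at hA
    have htype : ∀ S'' ∈ MF, (∀ a ∈ Dset T S S', (a ∈ S'' ↔ a ∈ S)) ∨
        (∀ a ∈ Dset T S S', (a ∈ S'' ↔ a ∈ S')) := by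
      intro S'' hS''
      by_contra hcc
      push_neg at hcc
      obtain ⟨hc1, hc2⟩ := hcc
      obtain ⟨a, ha, haD⟩ := hc1
      obtain ⟨b, hb, hbD⟩ := hc2
      exact absurd (hA S'' hS'' ⟨a, ha, by tauto⟩ b hb) (by tauto)
    by_cases hij0 : (i₀ ∈ S ↔ j₀ ∈ S)
    · have hall : ∀ S'' ∈ MF, (i₀ ∈ S'' ↔ j₀ ∈ S'') := by
        intro S'' hS''
        rcases htype S'' hS'' with h1 | h1
        · rw [h1 i₀ hi₀, h1 j₀ hj₀]; exact hij0
        · rw [h1 i₀ hi₀, h1 j₀ hj₀]; tauto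
      obtain ⟨Sx, hSx, hne⟩ := H1 i₀ hi₀T j₀ hj₀T hij
      exact hne (hall Sx hSx)
    · have hall : ∀ S'' ∈ MF, (i₀ ∈ S'' ↔ g j₀ ∈ S'') := by
        intro S'' hS''
        have hf := hflip j₀ hj₀T S'' hS''
        rcases htype S'' hS'' with h1 | h1
        · have e1 := h1 i₀ hi₀; have e2 := h1 j₀ hj₀; tauto
        · have e1 := h1 i₀ hi₀; have e2 := h1 j₀ hj₀; tauto
      obtain ⟨Sx, hSx, hne⟩ := H2 i₀ hi₀T j₀ hj₀T hij
      exact hne (hall Sx hSx)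

end Core

set_option maxHeartbeats 2000000 in
theorem stmt_5 {V : Type*} [Fintype V] (G : SimpleGraph V) (k : ℕ) (hk : 2 ≤ k)
    (htf : TwinFree G) (himax : imax G = k) :
    Fintype.card V ≤ 2 ^ (k - 1) + k - 1 := by
  classical
  have hfinM : {s : Set V | IsMaxIndep G s}.Finite := Set.toFinite _
  set MF : Finset (Set V) := hfinM.toFinset with hMFdef
  have hMF : ∀ S : Set V, S ∈ MF ↔ IsMaxIndep G S := by
    intro S; rw [hMFdef, Set.Finite.mem_toFinset]; rfl
  have hkcard : MF.card = k := by
    rw [hMFdef, ← Set.ncard_eq_toFinset_card _ hfinM]; exact himax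
  -- the map v ↦ family of maximal independent sets containing v
  set fv : V → Finset (Set V) := fun v => MF.filter (fun S => v ∈ S) with hfvdef
  have hfv_mem : ∀ v (S : Set V), S ∈ fv v ↔ S ∈ MF ∧ v ∈ S := by
    intro v S; rw [hfvdef]; exact Finset.mem_filter
  have hfv_sub : ∀ v, fv v ⊆ MF := fun v => Finset.filter_subset _ _
  have hfv_ne : ∀ v, (fv v).Nonempty := by
    intro v
    obtain ⟨S, hS, hvS⟩ := exists_maxIndep_mem G v
    exact ⟨S, (hfv_mem v S).2 ⟨(hMF S).2 hS, hvS⟩⟩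
  have hfv_inj : Function.Injective fv := by
    intro u v h
    refine eq_of_maxIndep_iff G htf (fun S hS => ?_)
    have := Finset.ext_iff.1 h S
    rw [hfv_mem, hfv_mem] at this
    have hSMF := (hMF S).2 hS
    tauto
  have hdist : ∀ u u' : V, u ≠ u' → ∃ S ∈ MF, ¬(u ∈ S ↔ u' ∈ S) := by
    intro u u' huu
    have hne : fv u ≠ fv u' := fun h => huu (hfv_inj h)
    have hne' : ¬ ∀ S, (S ∈ fv u ↔ S ∈ fv u') := fun h => hne (Finset.ext h)
    push_neg at hne'
    obtain ⟨S, hS⟩ := hne' 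
    rw [hfv_mem, hfv_mem] at hS
    have hSMF : S ∈ MF := by tauto
    exact ⟨S, hSMF, by tauto⟩
  have hcommon : ∀ u v : V, ¬ G.Adj u v → ∃ S ∈ MF, u ∈ S ∧ v ∈ S := by
    intro u v h
    obtain ⟨S, hS, h1, h2⟩ := exists_maxIndep_mem_pair G h
    exact ⟨S, (hMF S).2 hS, h1, h2⟩
  set 𝒜 : Finset (Finset (Set V)) := Finset.image fv Finset.univ with h𝒜def
  have h𝒜mem : ∀ A, A ∈ 𝒜 ↔ ∃ v, fv v = A := by
    intro A; rw [h𝒜def, Finset.mem_image]; simp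
  have hcardA : 𝒜.card = Fintype.card V := by
    rw [h𝒜def, Finset.card_image_of_injective _ hfv_inj, Finset.card_univ]
  set X : Finset (Finset (Set V)) := 𝒜.filter (fun A => A ≠ MF) with hXdef
  set B : Finset (Finset (Set V)) := 𝒜.filter (fun A => A ≠ MF ∧ (MF \ A) ∈ 𝒜) with hBdef
  set Wb : Finset V := Finset.univ.filter (fun v => fv v ≠ MF ∧ (MF \ fv v) ∈ 𝒜) with hWbdef
  have hWbmem : ∀ v, v ∈ Wb ↔ (fv v ≠ MF ∧ (MF \ fv v) ∈ 𝒜) := by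
    intro v; rw [hWbdef, Finset.mem_filter]; simp
  have hBcard : B.card = Wb.card := by
    have : B = Wb.image fv := by
      ext A
      constructor
      · intro hAB
        obtain ⟨hA𝒜, h1, h2⟩ := Finset.mem_filter.1 hAB
        obtain ⟨v, rfl⟩ := (h𝒜mem A).1 hA𝒜
        exact Finset.mem_image.2 ⟨v, (hWbmem v).2 ⟨h1, h2⟩, rfl⟩
      · intro hAI
        obtain ⟨v, hv, rfl⟩ := Finset.mem_image.1 hAI
        obtain ⟨h1, h2⟩ := (hWbmem v).1 hv
        exact Finset.mem_filter.2 ⟨(h𝒜mem _).2 ⟨v, rfl⟩, h1, h2⟩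
    rw [this, Finset.card_image_of_injective _ hfv_inj]
  -- the partner map
  set g : V → V := fun v => if h : ∃ u, fv u = MF \ fv v then h.choose else v with hgdef
  have hg : ∀ v ∈ Wb, fv (g v) = MF \ fv v := by
    intro v hv
    obtain ⟨-, h2⟩ := (hWbmem v).1 hv
    obtain ⟨u, hu⟩ := (h𝒜mem _).1 h2
    have hex : ∃ u, fv u = MF \ fv v := ⟨u, hu⟩
    rw [hgdef]; simp only [hex, dif_pos]
    exact hex.choose_spec
  have hg_flip : ∀ v ∈ Wb, ∀ S ∈ MF, (v ∈ S ↔ g v ∉ S) := by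
    intro v hv S hS
    have h1 : S ∈ fv (g v) ↔ S ∈ MF ∧ ¬(S ∈ MF ∧ v ∈ S) := by
      rw [hg v hv, Finset.mem_sdiff, hfv_mem]
    rw [hfv_mem] at h1
    tauto
  have hg_ne : ∀ v ∈ Wb, g v ≠ v := by
    intro v hv h
    obtain ⟨S, hSfv⟩ := hfv_ne v
    have h2 := hg v hv
    rw [h] at h2
    have h3 : S ∈ MF \ fv v := h2 ▸ hSfv
    rw [Finset.mem_sdiff] at h3
    exact h3.2 hSfv
  have hg_adj : ∀ v ∈ Wb, G.Adj v (g v) := by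
    intro v hv
    by_contra hnadj
    obtain ⟨S, hS, h1, h2⟩ := hcommon v (g v) hnadj
    exact ((hg_flip v hv S hS).1 h1) h2
  have hgWb : ∀ v ∈ Wb, g v ∈ Wb := by
    intro v hv
    obtain ⟨h1, h2⟩ := (hWbmem v).1 hv
    have hsub := hfv_sub v
    have hdd : MF \ (MF \ fv v) = fv v := sdiff_sdiff_eq_self hsub
    refine (hWbmem _).2 ⟨?_, ?_⟩
    · rw [hg v hv]
      intro h
      obtain ⟨S, hSfv⟩ := hfv_ne v
      have : S ∈ MF \ fv v := by rw [h]; exact hsub hSfv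
      rw [Finset.mem_sdiff] at this
      exact this.2 hSfv
    · rw [hg v hv, hdd]
      exact (h𝒜mem _).2 ⟨v, rfl⟩
  have hg_invol : ∀ v ∈ Wb, g (g v) = v := by
    intro v hv
    have h2 := hg (g v) (hgWb v hv)
    rw [hg v hv, sdiff_sdiff_eq_self (hfv_sub v)] at h2
    exact hfv_inj h2
  -- choose orientation representatives
  set e := Fintype.equivFin V with hedef
  set U : Finset V := Wb.filter (fun v => e v < e (g v)) with hUdef
  have hUsub : U ⊆ Wb := Finset.filter_subset _ _
  have hUmem : ∀ v, v ∈ U ↔ v ∈ Wb ∧ e v < e (g v) := fun v => Finset.mem_filter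
  have hgU : ∀ v ∈ U, g v ∉ U := by
    intro v hv hgv
    obtain ⟨hvWb, hlt⟩ := (hUmem v).1 hv
    obtain ⟨-, hlt'⟩ := (hUmem (g v)).1 hgv
    rw [hg_invol v hvWb] at hlt'
    exact absurd hlt (not_lt.2 hlt'.le)
  have hWbcard : Wb.card = 2 * U.card := by
    have hunion : Wb = U ∪ U.image g := by
      ext v
      constructor
      · intro hv
        rcases lt_or_gt_of_ne (fun h : e v = e (g v) => hg_ne v hv (e.injective h.symm)) with h | h
        · exact Finset.mem_union_left _ ((hUmem v).2 ⟨hv, h⟩)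
        · refine Finset.mem_union_right _ (Finset.mem_image.2 ⟨g v, ?_, hg_invol v hv⟩)
          exact (hUmem _).2 ⟨hgWb v hv, by rw [hg_invol v hv]; exact h⟩
      · intro hv
        rcases Finset.mem_union.1 hv with h | h
        · exact hUsub h
        · obtain ⟨w, hw, rfl⟩ := Finset.mem_image.1 h
          exact hgWb w (hUsub hw)
    have hdisj : Disjoint U (U.image g) := by
      rw [Finset.disjoint_left]
      intro a ha hb
      obtain ⟨w, hw, rfl⟩ := Finset.mem_image.1 hb
      exact hgU w hw ha
    have hinj : Set.InjOn g U := by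
      intro a ha b hb h
      rw [← hg_invol a (hUsub ha), h, hg_invol b (hUsub hb)]
    rw [hunion, Finset.card_union_of_disjoint hdisj, Finset.card_image_of_injOn hinj]
    omega
  have hMFne : MF.Nonempty := by
    rw [← Finset.card_pos, hkcard]; omega
  -- linear algebra: U.card + 1 ≤ k
  have hUk : U.card + 1 ≤ k := by
    have hTsubWb : U ⊆ Wb := hUsub
    set vecs : Option {x // x ∈ U} → ({S // S ∈ MF} → ZMod 2) :=
      fun i => match i with
        | none => fun _ => 1
        | some u => fun S => if (u : V) ∈ (S : Set V) then 1 else 0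
      with hvecsdef
    have hzmod : ∀ x : ZMod 2, x = 0 ∨ x = 1 := by decide
    have hli : LinearIndependent (ZMod 2) vecs := by
      rw [Fintype.linearIndependent_iff]
      intro gc hgc
      set cf : V → ZMod 2 := fun v => if h : v ∈ U then gc (some ⟨v, h⟩) else 0 with hcfdef
      have hcf : ∀ u : {x // x ∈ U}, gc (some u) = cf (u : V) := by
        intro u
        rw [hcfdef]
        simp only
        rw [dif_pos u.2]
      set T : Finset V := U.filter (fun v => cf v = 1) with hTdef
      have hTU : T ⊆ U := Finset.filter_subset _ _
      have heval : ∀ S ∈ MF, gc none + (((T.filter (· ∈ S)).card : ZMod 2)) = 0 := by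
        intro S hS
        have h0 := congrFun hgc ⟨S, hS⟩
        rw [Finset.sum_apply] at h0
        rw [univ_option, Finset.sum_insertNone] at h0
        simp only [Pi.smul_apply, smul_eq_mul, Pi.zero_apply] at h0
        have hstep1 : ∀ u : {x // x ∈ U},
            gc (some u) * vecs (some u) ⟨S, hS⟩
              = cf (u : V) * (if (u : V) ∈ S then 1 else 0) := by
          intro u
          rw [hcf u]
        rw [Finset.sum_congr rfl (fun u _ => hstep1 u)] at h0
        have hstep2 : ∑ u : {x // x ∈ U}, cf (u : V) * (if (u : V) ∈ S then 1 else 0)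
            = ∑ v ∈ U, cf v * (if v ∈ S then 1 else 0) :=
          Finset.sum_coe_sort U (fun v => cf v * (if v ∈ S then (1 : ZMod 2) else 0))
        rw [hstep2] at h0
        have hstep3 : ∑ v ∈ U, cf v * (if v ∈ S then 1 else 0)
            = ∑ v ∈ U, (if cf v = 1 ∧ v ∈ S then (1 : ZMod 2) else 0) := by
          refine Finset.sum_congr rfl (fun v _ => ?_)
          rcases hzmod (cf v) with hv | hv <;> rw [hv] <;> by_cases hvS : v ∈ S <;>
            simp [hvS]
        rw [hstep3] at h0
        have hstep4 : ∑ v ∈ U, (if cf v = 1 ∧ v ∈ S then (1 : ZMod 2) else 0)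
            = (((T.filter (· ∈ S)).card : ZMod 2)) := by
          rw [hTdef, Finset.filter_filter, card_filter_cast]
        rw [hstep4] at h0
        calc gc none + (((T.filter (· ∈ S)).card : ZMod 2))
            = gc none * 1 + (((T.filter (· ∈ S)).card : ZMod 2)) := by ring
        _ = 0 := h0
      by_cases hTne : T.Nonempty
      · exfalso
        have hcore := core_parity MF T g
          (fun u hu S hS => hg_flip u (hUsub (hTU hu)) S hS)
          (fun u _ => by
            obtain ⟨S, hSfv⟩ := hfv_ne u
            obtain ⟨h1, h2⟩ := (hfv_mem u S).1 hSfv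
            exact ⟨S, h1, h2⟩)
          (fun u _ => by
            obtain ⟨S, hSfv⟩ := hfv_ne (g u)
            obtain ⟨h1, h2⟩ := (hfv_mem (g u) S).1 hSfv
            exact ⟨S, h1, h2⟩)
          (fun u _ u' _ hne => hdist u u' hne)
          (fun u hu u' hu' hne => hdist u (g u') (by
            intro h
            exact hgU u' (hTU hu') (h ▸ (hTU hu))))
          ?_ hTne
        · obtain ⟨S, hS, S', hS', hne⟩ := hcore
          have e1 := heval S hS
          have e2 := heval S' hS'
          exact hne (by
            have := e1.trans e2.symm
            exact add_left_cancel this)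
        · -- the median hypothesis
          intro S₁ hS₁ S₂ hS₂ S₃ hS₃
          set I : Set V := {w | (∃ u ∈ T, w = u ∨ w = g u) ∧
            ((w ∈ S₁ ∧ w ∈ S₂) ∨ (w ∈ S₁ ∧ w ∈ S₃) ∨ (w ∈ S₂ ∧ w ∈ S₃))} with hIdef
          have hIindep : IsIndep G I := by
            intro w hw z hz hadj
            obtain ⟨-, hwm⟩ := hw
            obtain ⟨-, hzm⟩ := hz
            have hcommon3 : (w ∈ S₁ ∧ z ∈ S₁) ∨ (w ∈ S₂ ∧ z ∈ S₂) ∨ (w ∈ S₃ ∧ z ∈ S₃) := by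
              tauto
            rcases hcommon3 with ⟨h1, h2⟩ | ⟨h1, h2⟩ | ⟨h1, h2⟩
            · exact ((hMF S₁).1 hS₁).1 h1 h2 hadj
            · exact ((hMF S₂).1 hS₂).1 h1 h2 hadj
            · exact ((hMF S₃).1 hS₃).1 h1 h2 hadj
          obtain ⟨Sm, hSmMax, hISm⟩ := exists_maxIndep_superset G I hIindep
          refine ⟨Sm, (hMF Sm).2 hSmMax, ?_⟩
          intro u huT
          have huWb : u ∈ Wb := hUsub (hTU huT)
          have hf1 := hg_flip u huWb S₁ hS₁
          have hf2 := hg_flip u huWb S₂ hS₂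
          have hf3 := hg_flip u huWb S₃ hS₃
          constructor
          · intro huSm
            by_contra hmaj
            have hmajg : (g u ∈ S₁ ∧ g u ∈ S₂) ∨ (g u ∈ S₁ ∧ g u ∈ S₃) ∨
                (g u ∈ S₂ ∧ g u ∈ S₃) := by tauto
            have hgI : g u ∈ I := ⟨⟨u, huT, Or.inr rfl⟩, hmajg⟩
            exact hSmMax.1 huSm (hISm hgI) (hg_adj u huWb)
          · intro hmaj
            exact hISm ⟨⟨u, huT, Or.inl rfl⟩, hmaj⟩
      · -- T is empty
        rw [Finset.not_nonempty_iff_eq_empty] at hTne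
        have hnone : gc none = 0 := by
          obtain ⟨S₀, hS₀⟩ := hMFne
          have := heval S₀ hS₀
          rw [hTne] at this
          simpa using this
        intro i
        match i with
        | none => exact hnone
        | some u =>
          rw [hcf u]
          rcases hzmod (cf (u : V)) with h | h
          · exact h
          · exfalso
            have : (u : V) ∈ T := by
              rw [hTdef, Finset.mem_filter]
              exact ⟨u.2, h⟩
            rw [hTne] at this
            exact absurd this (Finset.notMem_empty _)
    have hcard := hli.fintype_card_le_finrank
    rw [Module.finrank_fintype_fun_eq_card] at hcard
    rw [Fintype.card_option, Fintype.card_coe, Fintype.card_coe, hkcard] at hcard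
    exact hcard
  -- counting
  set c : Finset (Set V) → Finset (Set V) := fun A => MF \ A with hcdef
  set cX : Finset (Finset (Set V)) := X.image c with hcXdef
  have h𝒜ne : ∀ A ∈ 𝒜, A.Nonempty := by
    intro A hA
    obtain ⟨v, rfl⟩ := (h𝒜mem A).1 hA
    exact hfv_ne v
  have h𝒜sub : ∀ A ∈ 𝒜, A ⊆ MF := by
    intro A hA
    obtain ⟨v, rfl⟩ := (h𝒜mem A).1 hA
    exact hfv_sub v
  set PP : Finset (Finset (Set V)) := MF.powerset.filter (fun A => A ≠ ∅ ∧ A ≠ MF) with hPPdef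
  have hXmem : ∀ A, A ∈ X ↔ A ∈ 𝒜 ∧ A ≠ MF := fun A => Finset.mem_filter
  have hXPP : X ⊆ PP := by
    intro A hA
    obtain ⟨hA𝒜, hne⟩ := (hXmem A).1 hA
    exact Finset.mem_filter.2 ⟨Finset.mem_powerset.2 (h𝒜sub A hA𝒜),
      Finset.nonempty_iff_ne_empty.1 (h𝒜ne A hA𝒜), hne⟩
  have hcXPP : cX ⊆ PP := by
    intro A hA
    obtain ⟨A', hA', rfl⟩ := Finset.mem_image.1 hA
    obtain ⟨hA𝒜, hne⟩ := (hXmem A').1 hA'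
    rw [hcdef]
    refine Finset.mem_filter.2 ⟨Finset.mem_powerset.2 (Finset.sdiff_subset), ?_, ?_⟩
    · intro h
      rw [Finset.sdiff_eq_empty_iff_subset] at h
      exact hne (le_antisymm (h𝒜sub A' hA𝒜) h)
    · intro h
      obtain ⟨S, hS⟩ := h𝒜ne A' hA𝒜
      have : S ∈ MF \ A' := by
        simp only [hcdef] at h
        rw [h]
        exact h𝒜sub A' hA𝒜 hS
      rw [Finset.mem_sdiff] at this
      exact this.2 hS
  have hPPcard : PP.card = 2 ^ k - 2 := by
    have heq : PP = MF.powerset \ {∅, MF} := by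
      ext A
      rw [hPPdef, Finset.mem_filter, Finset.mem_sdiff, Finset.mem_insert, Finset.mem_singleton]
      tauto
    have hsub2 : ({∅, MF} : Finset (Finset (Set V))) ⊆ MF.powerset := by
      intro A hA
      rcases Finset.mem_insert.1 hA with rfl | hA
      · exact Finset.mem_powerset.2 (Finset.empty_subset _)
      · rw [Finset.mem_singleton] at hA
        subst hA
        exact Finset.mem_powerset_self _
    rw [heq, Finset.card_sdiff_of_subset hsub2, Finset.card_powerset, hkcard]
    congr 1
    rw [Finset.card_insert_of_notMem (by
      rw [Finset.mem_singleton]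
      exact fun h => Finset.nonempty_iff_ne_empty.1 hMFne h.symm), Finset.card_singleton]
  have hcXcard : cX.card = X.card := by
    rw [hcXdef]
    apply Finset.card_image_of_injOn
    intro A hA A' hA' h
    have hsubA := h𝒜sub A ((hXmem A).1 hA).1
    have hsubA' := h𝒜sub A' ((hXmem A').1 hA').1
    rw [hcdef] at h
    simp only at h
    rw [← sdiff_sdiff_eq_self hsubA, h, sdiff_sdiff_eq_self hsubA']
  have hXcap : X ∩ cX = B := by
    ext A
    constructor
    · intro hAin
      obtain ⟨hAX, hAcX⟩ := Finset.mem_inter.1 hAin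
      obtain ⟨hA𝒜, hne⟩ := (hXmem A).1 hAX
      obtain ⟨A', hA', hA'eq⟩ := Finset.mem_image.1 hAcX
      obtain ⟨hA'𝒜, hne'⟩ := (hXmem A').1 hA'
      refine Finset.mem_filter.2 ⟨hA𝒜, hne, ?_⟩
      have : MF \ A = A' := by
        rw [← hA'eq]
        simp only [hcdef]
        exact sdiff_sdiff_eq_self (h𝒜sub A' hA'𝒜)
      rw [this]
      exact hA'𝒜
    · intro hAB
      obtain ⟨hA𝒜, hne, hcomp⟩ := Finset.mem_filter.1 hAB
      refine Finset.mem_inter.2 ⟨(hXmem A).2 ⟨hA𝒜, hne⟩, ?_⟩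
      have hcompX : MF \ A ∈ X := by
        refine (hXmem _).2 ⟨hcomp, ?_⟩
        intro h
        obtain ⟨S, hS⟩ := h𝒜ne A hA𝒜
        have : S ∈ MF \ A := by rw [h]; exact h𝒜sub A hA𝒜 hS
        rw [Finset.mem_sdiff] at this
        exact this.2 hS
      refine Finset.mem_image.2 ⟨MF \ A, hcompX, ?_⟩
      simp only [hcdef]
      exact sdiff_sdiff_eq_self (h𝒜sub A hA𝒜)
  have hcount : (X ∪ cX).card + (X ∩ cX).card = X.card + cX.card :=
    Finset.card_union_add_card_inter X cX
  have hUcard : (X ∪ cX).card ≤ 2 ^ k - 2 := by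
    rw [← hPPcard]
    exact Finset.card_le_card (Finset.union_subset hXPP hcXPP)
  have h𝒜X : 𝒜.card ≤ X.card + 1 := by
    have : 𝒜 ⊆ X ∪ {MF} := by
      intro A hA
      by_cases h : A = MF
      · exact Finset.mem_union_right _ (by rw [h]; exact Finset.mem_singleton_self _)
      · exact Finset.mem_union_left _ ((hXmem A).2 ⟨hA, h⟩)
    calc 𝒜.card ≤ (X ∪ {MF}).card := Finset.card_le_card this
    _ ≤ X.card + 1 := by
            apply (Finset.card_union_le _ _).trans
            simp
  have h2k : 2 ^ k = 2 * 2 ^ (k - 1) := by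
    conv_lhs => rw [show k = (k - 1) + 1 by omega]
    rw [pow_succ]
    ring
  have hpk : 2 ≤ 2 ^ (k - 1) := by
    calc 2 = 2 ^ 1 := by norm_num
    _ ≤ 2 ^ (k - 1) := Nat.pow_le_pow_right (by norm_num) (by omega)
  rw [← hcardA]
  rw [hXcap] at hcount
  omega
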